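/- The number of distinct corner polyhedra of type A_N equals 2·C_{N+1} − 1, where C_{N+1} is the (N+1)-st Catalan number. Equivalently, the number of corner hulls of nonempty finite sets of vectors of the form e_i − e_j (i,j ∈ {1,…,N+1}, i = j allowed), projected to the sum-zero hyperplane, equals 2·C_{N+1} − 1. -/

import Mathlib

open Pointwise

def sfun (N : ℕ) (k : Fin N) (w : Fin (N + 1) → ℝ) : ℝ :=
  ∑ l ∈ Finset.univ.filter (fun l : Fin (N + 1) => (l : ℕ) ≤ (k : ℕ)), w l

def rootVec (N : ℕ) (i j : Fin (N + 1)) : Fin (N + 1) → ℝ :=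
  Pi.single i 1 - Pi.single j 1

def Oplus (N : ℕ) : Set (Fin (N + 1) → ℝ) :=
  {w | (∑ l, w l = 0) ∧ ∀ k : Fin N, 0 ≤ sfun N k w}

/-- integer "partial sums" vector of a root indexed by a pair. -/
def sig (N : ℕ) (p : Fin (N + 1) × Fin (N + 1)) (k : Fin N) : ℤ :=
  (if (p.1 : ℕ) ≤ (k : ℕ) then 1 else 0) - (if (p.2 : ℕ) ≤ (k : ℕ) then 1 else 0)

def pLe (N : ℕ) (p q : Fin (N + 1) × Fin (N + 1)) : Prop :=
  ∀ k : Fin N, sig N p k ≤ sig N q k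

instance (N : ℕ) (p q : Fin (N + 1) × Fin (N + 1)) : Decidable (pLe N p q) := by
  unfold pLe; infer_instance

lemma sfun_rootVec (N : ℕ) (k : Fin N) (p : Fin (N + 1) × Fin (N + 1)) :
    sfun N k (rootVec N p.1 p.2) = ((sig N p k : ℤ) : ℝ) := by
  unfold sfun rootVec sig
  simp only [Pi.sub_apply]
  rw [Finset.sum_sub_distrib]
  simp only [Pi.single_apply, Finset.sum_ite_eq', Finset.mem_filter, Finset.mem_univ, true_and]
  push_cast
  rfl

lemma sum_rootVec (N : ℕ) (p : Fin (N + 1) × Fin (N + 1)) :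
    ∑ l, rootVec N p.1 p.2 l = 0 := by
  unfold rootVec
  simp [Finset.sum_sub_distrib, Finset.sum_pi_single]

lemma sfun_add (N : ℕ) (k : Fin N) (x y : Fin (N + 1) → ℝ) :
    sfun N k (x + y) = sfun N k x + sfun N k y := by
  unfold sfun; rw [← Finset.sum_add_distrib]; rfl

lemma sfun_sum (N : ℕ) (k : Fin N) {α : Type*} (s : Finset α) (f : α → (Fin (N+1) → ℝ)) :
    sfun N k (∑ y ∈ s, f y) = ∑ y ∈ s, sfun N k (f y) := by
  unfold sfun
  rw [eq_comm, Finset.sum_comm]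
  congr 1
  funext l
  simp

lemma sfun_smul (N : ℕ) (k : Fin N) (c : ℝ) (x : Fin (N+1) → ℝ) :
    sfun N k (c • x) = c * sfun N k x := by
  unfold sfun; rw [Finset.mul_sum]; congr 1

lemma oplus_add (N : ℕ) {o o' : Fin (N+1) → ℝ} (h : o ∈ Oplus N) (h' : o' ∈ Oplus N) :
    o + o' ∈ Oplus N := by
  obtain ⟨h1, h2⟩ := h; obtain ⟨h1', h2'⟩ := h'
  refine ⟨?_, fun k => ?_⟩
  · simp only [Pi.add_apply, Finset.sum_add_distrib, h1, h1', add_zero]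
  · rw [sfun_add]; exact add_nonneg (h2 k) (h2' k)

lemma oplus_convex (N : ℕ) : Convex ℝ (Oplus N) := by
  intro x hx y hy a b ha hb hab
  obtain ⟨h1, h2⟩ := hx; obtain ⟨h1', h2'⟩ := hy
  constructor
  · simp only [Pi.add_apply, Pi.smul_apply, smul_eq_mul, Finset.sum_add_distrib, ← Finset.mul_sum,
      h1, h1', mul_zero, add_zero]
  · intro k
    rw [sfun_add, sfun_smul, sfun_smul]
    exact add_nonneg (mul_nonneg ha (h2 k)) (mul_nonneg hb (h2' k))

lemma zero_mem_oplus (N : ℕ) : (0 : Fin (N+1) → ℝ) ∈ Oplus N := by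
  refine ⟨by simp, fun k => ?_⟩
  unfold sfun; simp
section SigLemmas
variable {N : ℕ} {p q : Fin (N + 1) × Fin (N + 1)}

lemma neg_one_le_sig (k : Fin N) : -1 ≤ sig N p k := by
  simp only [sig]; split_ifs <;> omega

lemma sig_le_one (k : Fin N) : sig N p k ≤ 1 := by
  simp only [sig]; split_ifs <;> omega

lemma sig_nonneg_of (h : (p.1 : ℕ) ≤ (p.2 : ℕ)) (k : Fin N) : 0 ≤ sig N p k := by
  simp only [sig]; split_ifs <;> omega

lemma sig_nonpos_of (h : (p.2 : ℕ) ≤ (p.1 : ℕ)) (k : Fin N) : sig N p k ≤ 0 := by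
  simp only [sig]; split_ifs <;> omega

lemma pLe_refl (p : Fin (N + 1) × Fin (N + 1)) : pLe N p p := fun _ => le_rfl

lemma pLe_trans {r : Fin (N + 1) × Fin (N + 1)} (h : pLe N p q) (h' : pLe N q r) :
    pLe N p r := fun k => (h k).trans (h' k)

lemma pLe_of_mixed (h : (p.2 : ℕ) ≤ (p.1 : ℕ)) (h' : (q.1 : ℕ) ≤ (q.2 : ℕ)) : pLe N p q :=
  fun k => (sig_nonpos_of h k).trans (sig_nonneg_of h' k)

lemma pLe_pos_iff (hp : (p.1 : ℕ) < (p.2 : ℕ)) (hq : (q.1 : ℕ) < (q.2 : ℕ)) :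
    pLe N p q ↔ (q.1 : ℕ) ≤ (p.1 : ℕ) ∧ (p.2 : ℕ) ≤ (q.2 : ℕ) := by
  constructor
  · intro H
    have hb2 := p.2.isLt
    have h1 := H ⟨(p.1 : ℕ), by omega⟩
    have h2 := H ⟨(p.2 : ℕ) - 1, by omega⟩
    simp only [sig] at h1 h2
    split_ifs at h1 h2 <;> omega
  · rintro ⟨h1, h2⟩ k
    simp only [sig]; split_ifs <;> omega

lemma pLe_neg_iff (hp : (p.2 : ℕ) < (p.1 : ℕ)) (hq : (q.2 : ℕ) < (q.1 : ℕ)) :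
    pLe N p q ↔ (p.2 : ℕ) ≤ (q.2 : ℕ) ∧ (q.1 : ℕ) ≤ (p.1 : ℕ) := by
  constructor
  · intro H
    have hb1 := q.1.isLt
    have h1 := H ⟨(q.2 : ℕ), by omega⟩
    have h2 := H ⟨(q.1 : ℕ) - 1, by omega⟩
    simp only [sig] at h1 h2
    split_ifs at h1 h2 <;> omega
  · rintro ⟨h1, h2⟩ k
    simp only [sig]; split_ifs <;> omega

lemma pos_of_pLe_pos (hp : (p.1 : ℕ) < (p.2 : ℕ)) (h : pLe N p q) : (q.1 : ℕ) < (q.2 : ℕ) := by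
  have hb2 := p.2.isLt
  have h1 := h ⟨(p.1 : ℕ), by omega⟩
  simp only [sig] at h1
  split_ifs at h1 <;> omega

lemma neg_of_pLe_neg (hq : (q.2 : ℕ) < (q.1 : ℕ)) (h : pLe N p q) : (p.2 : ℕ) < (p.1 : ℕ) := by
  have hb1 := q.1.isLt
  have h1 := h ⟨(q.2 : ℕ), by omega⟩
  simp only [sig] at h1
  split_ifs at h1 <;> omega

end SigLemmas

def corner (N : ℕ) (ζ : Finset (Fin (N + 1) × Fin (N + 1))) : Set (Fin (N + 1) → ℝ) :=
  convexHull ℝ ((fun p : Fin (N + 1) × Fin (N + 1) => rootVec N p.1 p.2) ''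
      (ζ : Set (Fin (N + 1) × Fin (N + 1)))) + Oplus N

lemma sfun_sub (N : ℕ) (k : Fin N) (x y : Fin (N+1) → ℝ) :
    sfun N k (x - y) = sfun N k x - sfun N k y := by
  unfold sfun; rw [← Finset.sum_sub_distrib]; rfl

lemma root_mem_corner_iff {N : ℕ} {ζ : Finset (Fin (N + 1) × Fin (N + 1))}
    (q : Fin (N + 1) × Fin (N + 1)) :
    rootVec N q.1 q.2 ∈ corner N ζ ↔ ∃ p ∈ ζ, pLe N p q := by
  constructor
  · intro hmem
    rw [corner, Set.mem_add] at hmem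
    obtain ⟨x, hx, o, ho, hxo⟩ := hmem
    rw [show (fun p : Fin (N + 1) × Fin (N + 1) => rootVec N p.1 p.2) '' ↑ζ
        = ↑(ζ.image (fun p => rootVec N p.1 p.2)) from (Finset.coe_image).symm] at hx
    rw [Finset.mem_convexHull'] at hx
    obtain ⟨w, hw0, hw1, hwx⟩ := hx
    set Y := ζ.image (fun p => rootVec N p.1 p.2) with hY
    have hex : ∀ y ∈ Y, ∃ p, p ∈ ζ ∧ rootVec N p.1 p.2 = y := by
      intro y hy; simpa [hY, Finset.mem_image] using hy
    have hsfx : ∀ k : Fin N, sfun N k x = ∑ y ∈ Y, w y * sfun N k y := by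
      intro k; rw [← hwx, sfun_sum]
      exact Finset.sum_congr rfl fun y _ => sfun_smul N k (w y) y
    have hxle : ∀ k : Fin N, sfun N k x ≤ ((sig N q k : ℤ) : ℝ) := by
      intro k
      have : sfun N k (rootVec N q.1 q.2) = sfun N k x + sfun N k o := by
        rw [← hxo, sfun_add]
      rw [sfun_rootVec] at this
      have := ho.2 k
      linarith
    obtain ⟨y0, hy0Y, hy0ne⟩ : ∃ y ∈ Y, w y ≠ 0 := by
      apply Finset.exists_ne_zero_of_sum_ne_zero
      rw [hw1]; exact one_ne_zero
    have hy0pos : 0 < w y0 := lt_of_le_of_ne (hw0 y0 hy0Y) (Ne.symm hy0ne)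
    obtain ⟨p0, hp0ζ, hp0y⟩ := hex y0 hy0Y
    by_cases hqn : (q.2 : ℕ) < (q.1 : ℕ)
    · -- q is negative
      have key : ∀ k : Fin N, sig N q k = -1 → sig N p0 k = -1 := by
        intro k hk
        have hterm : ∀ y ∈ Y, 0 ≤ w y * (sfun N k y + 1) := by
          intro y hy
          obtain ⟨p, hpζ, hpy⟩ := hex y hy
          have : ((-1 : ℤ) : ℝ) ≤ sfun N k y := by
            rw [← hpy, sfun_rootVec]; exact_mod_cast neg_one_le_sig k
          have h1 : (0:ℝ) ≤ sfun N k y + 1 := by push_cast at this; linarith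
          exact mul_nonneg (hw0 y hy) h1
        have hsum : ∑ y ∈ Y, w y * (sfun N k y + 1) ≤ 0 := by
          have : ∑ y ∈ Y, w y * (sfun N k y + 1)
              = (∑ y ∈ Y, w y * sfun N k y) + ∑ y ∈ Y, w y := by
            rw [← Finset.sum_add_distrib]
            exact Finset.sum_congr rfl fun y _ => by ring
          rw [this, hw1, ← hsfx]
          have := hxle k
          rw [hk] at this; push_cast at this; linarith
        have hle0 : w y0 * (sfun N k y0 + 1) ≤ 0 := by
          have := Finset.single_le_sum hterm hy0Y
          linarith
        have h2 : sfun N k y0 + 1 ≤ 0 := by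
          by_contra hcon
          push_neg at hcon
          nlinarith
        have h3 : ((-1 : ℤ) : ℝ) ≤ sfun N k y0 := by
          rw [← hp0y, sfun_rootVec]; exact_mod_cast neg_one_le_sig k
        have h4 : sfun N k y0 = -1 := by push_cast at h3; linarith
        rw [← hp0y, sfun_rootVec] at h4
        exact_mod_cast h4
      have hb1 := q.1.isLt
      have hk1 : sig N q ⟨(q.2 : ℕ), by omega⟩ = -1 := by
        simp only [sig]; split_ifs <;> omega
      have hk2 : sig N q ⟨(q.1 : ℕ) - 1, by omega⟩ = -1 := by
        simp only [sig]; split_ifs <;> omega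
      have e1 := key _ hk1
      have e2 := key _ hk2
      refine ⟨p0, hp0ζ, fun k => ?_⟩
      simp only [sig] at e1 e2 ⊢
      split_ifs at e1 e2 ⊢ <;> omega
    · -- q is nonnegative
      push_neg at hqn
      by_cases hneg : ∃ p ∈ ζ, (p.2 : ℕ) ≤ (p.1 : ℕ)
      · obtain ⟨p, hpζ, hp⟩ := hneg
        exact ⟨p, hpζ, pLe_of_mixed hp hqn⟩
      push_neg at hneg
      by_cases hnest : ∃ p ∈ ζ, (q.1 : ℕ) ≤ (p.1 : ℕ) ∧ (p.2 : ℕ) ≤ (q.2 : ℕ)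
      · obtain ⟨p, hpζ, hp1, hp2⟩ := hnest
        refine ⟨p, hpζ, fun k => ?_⟩
        simp only [sig]; split_ifs <;> omega
      push_neg at hnest
      exfalso
      have hp0pos : (p0.1 : ℕ) < (p0.2 : ℕ) := hneg p0 hp0ζ
      have hp0alt := hnest p0 hp0ζ
      have hb2 := p0.2.isLt
      have hk0 : ∃ k0 : Fin N, sig N q k0 = 0 ∧ sig N p0 k0 = 1 := by
        by_cases hc : (p0.1 : ℕ) < (q.1 : ℕ)
        · refine ⟨⟨(p0.1 : ℕ), by omega⟩, ?_, ?_⟩ <;>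
          · simp only [sig]; split_ifs <;> omega
        · have hq2 : (q.2 : ℕ) < (p0.2 : ℕ) := by
            rcases Nat.lt_or_ge (p0.1 : ℕ) (q.1 : ℕ) with h | h
            · omega
            · exact hp0alt h
          refine ⟨⟨(p0.2 : ℕ) - 1, by omega⟩, ?_, ?_⟩ <;>
          · simp only [sig]; split_ifs <;> omega
      obtain ⟨k0, hq0, hp01⟩ := hk0
      have hterm : ∀ y ∈ Y, 0 ≤ w y * sfun N k0 y := by
        intro y hy
        obtain ⟨p, hpζ, hpy⟩ := hex y hy
        have : ((0 : ℤ) : ℝ) ≤ sfun N k0 y := by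
          rw [← hpy, sfun_rootVec]
          exact_mod_cast sig_nonneg_of (le_of_lt (hneg p hpζ)) k0
        exact mul_nonneg (hw0 y hy) (by exact_mod_cast this)
      have hbig : w y0 * sfun N k0 y0 ≤ ∑ y ∈ Y, w y * sfun N k0 y :=
        Finset.single_le_sum hterm hy0Y
      have hy0val : sfun N k0 y0 = 1 := by
        rw [← hp0y, sfun_rootVec, hp01]; norm_num
      rw [hy0val, mul_one] at hbig
      have := hxle k0
      rw [hq0, hsfx k0] at this
      push_cast at this
      linarith
  · rintro ⟨p, hpζ, hle⟩
    rw [corner, Set.mem_add]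
    refine ⟨rootVec N p.1 p.2, subset_convexHull ℝ _ ⟨p, hpζ, rfl⟩,
      rootVec N q.1 q.2 - rootVec N p.1 p.2, ⟨?_, ?_⟩, by ring⟩
    · simp only [Pi.sub_apply, Finset.sum_sub_distrib, sum_rootVec, sub_zero]
    · intro k
      rw [sfun_sub, sfun_rootVec, sfun_rootVec]
      have := hle k
      push_cast
      exact_mod_cast sub_nonneg.mpr (by exact_mod_cast this)

def UpClosed (N : ℕ) (F : Finset (Fin (N + 1) × Fin (N + 1))) : Prop :=
  ∀ p ∈ F, ∀ q, pLe N p q → q ∈ F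

instance (N : ℕ) (F : Finset (Fin (N + 1) × Fin (N + 1))) : Decidable (UpClosed N F) := by
  unfold UpClosed; infer_instance

def upF (N : ℕ) (ζ : Finset (Fin (N + 1) × Fin (N + 1))) : Finset (Fin (N + 1) × Fin (N + 1)) :=
  Finset.univ.filter (fun q => ∃ p ∈ ζ, pLe N p q)

lemma subset_upF (N : ℕ) (ζ : Finset (Fin (N + 1) × Fin (N + 1))) : ζ ⊆ upF N ζ :=
  fun p hp => Finset.mem_filter.mpr ⟨Finset.mem_univ _, p, hp, pLe_refl p⟩

lemma corner_add_oplus {N : ℕ} {ζ : Finset (Fin (N + 1) × Fin (N + 1))}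
    {x o : Fin (N + 1) → ℝ} (hx : x ∈ corner N ζ) (ho : o ∈ Oplus N) :
    x + o ∈ corner N ζ := by
  rw [corner, Set.mem_add] at hx ⊢
  obtain ⟨c, hc, o1, ho1, hco⟩ := hx
  exact ⟨c, hc, o1 + o, oplus_add N ho1 ho, by rw [← add_assoc, hco]⟩

lemma convex_corner (N : ℕ) (ζ : Finset (Fin (N + 1) × Fin (N + 1))) :
    Convex ℝ (corner N ζ) :=
  Convex.add (convex_convexHull ℝ _) (oplus_convex N)

lemma corner_eq_corner_upF (N : ℕ) (ζ : Finset (Fin (N + 1) × Fin (N + 1))) :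
    corner N ζ = corner N (upF N ζ) := by
  apply Set.Subset.antisymm
  · exact Set.add_subset_add_right (convexHull_mono
      (Set.image_mono (Finset.coe_subset.mpr (subset_upF N ζ))))
  · have hroots : (fun p : Fin (N + 1) × Fin (N + 1) => rootVec N p.1 p.2) '' ↑(upF N ζ)
        ⊆ corner N ζ := by
      rintro _ ⟨p, hp, rfl⟩
      rw [Finset.mem_coe, upF, Finset.mem_filter] at hp
      obtain ⟨-, p', hp', hle⟩ := hp
      exact (root_mem_corner_iff p).mpr ⟨p', hp', hle⟩
    have hhull := convexHull_min hroots (convex_corner N ζ)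
    rintro z hz
    rw [corner, Set.mem_add] at hz
    obtain ⟨c, hc, o, ho, hco⟩ := hz
    rw [← hco]
    exact corner_add_oplus (hhull hc) ho

lemma upF_eq_of_upClosed {N : ℕ} {F : Finset (Fin (N + 1) × Fin (N + 1))}
    (h : UpClosed N F) : upF N F = F := by
  apply Finset.Subset.antisymm
  · intro q hq
    rw [upF, Finset.mem_filter] at hq
    obtain ⟨-, p, hp, hle⟩ := hq
    exact h p hp q hle
  · exact subset_upF N F

open scoped Classical in
noncomputable def memRoots (N : ℕ) (P : Set (Fin (N + 1) → ℝ)) :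
    Finset (Fin (N + 1) × Fin (N + 1)) :=
  Finset.univ.filter (fun q => rootVec N q.1 q.2 ∈ P)

lemma memRoots_corner (N : ℕ) (ζ : Finset (Fin (N + 1) × Fin (N + 1))) :
    memRoots N (corner N ζ) = upF N ζ := by
  ext q
  simp only [memRoots, upF, Finset.mem_filter, Finset.mem_univ, true_and]
  exact root_mem_corner_iff q

def Tset (N : ℕ) : Finset (Finset (Fin (N + 1) × Fin (N + 1))) :=
  Finset.univ.filter (fun F => F.Nonempty ∧ UpClosed N F)

lemma ncard_eq_Tcard (N : ℕ) :
    Set.ncard {P : Set (Fin (N + 1) → ℝ) |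
      ∃ ζ : Finset (Fin (N + 1) × Fin (N + 1)), ζ.Nonempty ∧
        P = convexHull ℝ ((fun p : Fin (N + 1) × Fin (N + 1) => rootVec N p.1 p.2) ''
              (ζ : Set (Fin (N + 1) × Fin (N + 1)))) + Oplus N} = (Tset N).card := by
  have hbij : Set.BijOn (memRoots N) {P : Set (Fin (N + 1) → ℝ) |
      ∃ ζ, ζ.Nonempty ∧ P = corner N ζ} ↑(Tset N) := by
    refine ⟨?_, ?_, ?_⟩
    · rintro P ⟨ζ, hζ, rfl⟩
      rw [Finset.mem_coe, Tset, Finset.mem_filter]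
      refine ⟨Finset.mem_univ _, ?_, ?_⟩
      · rw [memRoots_corner]
        obtain ⟨p, hp⟩ := hζ
        exact ⟨p, subset_upF N ζ hp⟩
      · rw [memRoots_corner]
        intro p hp q hle
        rw [upF, Finset.mem_filter] at hp ⊢
        obtain ⟨-, p', hp', hle'⟩ := hp
        exact ⟨Finset.mem_univ _, p', hp', pLe_trans hle' hle⟩
    · rintro P ⟨ζ, hζ, rfl⟩ P' ⟨ζ', hζ', rfl⟩ heq
      rw [memRoots_corner, memRoots_corner] at heq
      rw [corner_eq_corner_upF N ζ, corner_eq_corner_upF N ζ', heq]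
    · rintro F hF
      rw [Finset.mem_coe, Tset, Finset.mem_filter] at hF
      obtain ⟨-, hne, hup⟩ := hF
      refine ⟨corner N F, ⟨F, hne, rfl⟩, ?_⟩
      rw [memRoots_corner, upF_eq_of_upClosed hup]
  have h1 : {P : Set (Fin (N + 1) → ℝ) | ∃ ζ, ζ.Nonempty ∧ P = corner N ζ}.ncard
      = (↑(Tset N) : Set (Finset (Fin (N + 1) × Fin (N + 1)))).ncard := by
    rw [← hbij.image_eq, Set.ncard_image_of_injOn hbij.injOn]
  rw [show {P : Set (Fin (N + 1) → ℝ) |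
      ∃ ζ : Finset (Fin (N + 1) × Fin (N + 1)), ζ.Nonempty ∧
        P = convexHull ℝ ((fun p : Fin (N + 1) × Fin (N + 1) => rootVec N p.1 p.2) ''
              (ζ : Set (Fin (N + 1) × Fin (N + 1)))) + Oplus N}
      = {P : Set (Fin (N + 1) → ℝ) | ∃ ζ, ζ.Nonempty ∧ P = corner N ζ} from rfl]
  rw [h1, Set.ncard_coe_finset]
section M3
variable {N : ℕ}

lemma mem_image_swap {α : Type*} [DecidableEq α] {s : Finset (α × α)} {q : α × α} :
    q ∈ s.image Prod.swap ↔ q.swap ∈ s := by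
  constructor
  · rintro h
    rw [Finset.mem_image] at h
    obtain ⟨a, ha, rfl⟩ := h
    simpa using ha
  · intro h
    exact Finset.mem_image.mpr ⟨q.swap, h, Prod.swap_swap q⟩

def IsDownF (N : ℕ) (D : Finset (Fin (N + 1) × Fin (N + 1))) : Prop :=
  (∀ p ∈ D, (p.1 : ℕ) < (p.2 : ℕ)) ∧
  ∀ p ∈ D, ∀ q : Fin (N + 1) × Fin (N + 1),
    (q.1 : ℕ) < (q.2 : ℕ) → (p.1 : ℕ) ≤ (q.1 : ℕ) → (q.2 : ℕ) ≤ (p.2 : ℕ) → q ∈ D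

def posP (N : ℕ) : Finset (Fin (N + 1) × Fin (N + 1)) :=
  Finset.univ.filter (fun p => (p.1 : ℕ) < (p.2 : ℕ))

noncomputable instance (N : ℕ) : DecidablePred (IsDownF N) := Classical.decPred _

noncomputable def downSet (N : ℕ) : Finset (Finset (Fin (N + 1) × Fin (N + 1))) :=
  Finset.univ.filter (IsDownF N)

lemma posP_mem_downSet (N : ℕ) : posP N ∈ downSet N := by
  rw [downSet, Finset.mem_filter]
  refine ⟨Finset.mem_univ _, fun p hp => (Finset.mem_filter.mp hp).2, fun p hp q hq _ _ => ?_⟩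
  exact Finset.mem_filter.mpr ⟨Finset.mem_univ _, hq⟩

lemma part1_card (N : ℕ) :
    ((Tset N).filter (fun F => ∀ p ∈ F, (p.1 : ℕ) < (p.2 : ℕ))).card
      = (downSet N).card - 1 := by
  rw [← Finset.card_erase_of_mem (posP_mem_downSet N)]
  apply Finset.card_nbij' (fun F => posP N \ F) (fun D => posP N \ D)
  · intro F hF
    rw [Finset.mem_coe] at hF ⊢
    rw [Finset.mem_filter, Tset, Finset.mem_filter] at hF
    obtain ⟨⟨-, hne, hup⟩, hpos⟩ := hF
    rw [Finset.mem_erase]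
    constructor
    · obtain ⟨p, hp⟩ := hne
      intro heq
      have hpP : p ∈ posP N := Finset.mem_filter.mpr ⟨Finset.mem_univ _, hpos p hp⟩
      rw [← heq] at hpP
      exact (Finset.mem_sdiff.mp hpP).2 hp
    · rw [downSet, Finset.mem_filter]
      refine ⟨Finset.mem_univ _, fun p hp => ?_, fun p hp q hq h1 h2 => ?_⟩
      · exact (Finset.mem_filter.mp (Finset.mem_sdiff.mp hp).1).2
      · rw [Finset.mem_sdiff] at hp ⊢
        obtain ⟨hp1, hp2⟩ := hp
        have hppos := (Finset.mem_filter.mp hp1).2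
        refine ⟨Finset.mem_filter.mpr ⟨Finset.mem_univ _, hq⟩, fun hqF => ?_⟩
        have hle : pLe N q p := by
          intro k; simp only [sig]; split_ifs <;> omega
        exact hp2 (hup q hqF p hle)
  · intro D hD
    rw [Finset.mem_coe] at hD ⊢
    rw [Finset.mem_erase, downSet, Finset.mem_filter] at hD
    obtain ⟨hne, -, hD1, hD2⟩ := hD
    rw [Finset.mem_filter, Tset, Finset.mem_filter]
    refine ⟨⟨Finset.mem_univ _, ?_, ?_⟩, fun p hp => (Finset.mem_filter.mp (Finset.mem_sdiff.mp hp).1).2⟩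
    · rw [Finset.sdiff_nonempty]
      intro hsub
      exact hne (Finset.Subset.antisymm (fun p hp => Finset.mem_filter.mpr
        ⟨Finset.mem_univ _, hD1 p hp⟩) hsub)
    · intro p hp q hle
      rw [Finset.mem_sdiff] at hp ⊢
      obtain ⟨hp1, hp2⟩ := hp
      have hppos := (Finset.mem_filter.mp hp1).2
      have hqpos := pos_of_pLe_pos hppos hle
      obtain ⟨h1, h2⟩ := (pLe_pos_iff hppos hqpos).mp hle
      refine ⟨Finset.mem_filter.mpr ⟨Finset.mem_univ _, hqpos⟩, fun hqD => ?_⟩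
      exact hp2 (hD2 q hqD p hppos h1 h2)
  · intro F hF
    rw [Finset.mem_coe] at hF
    rw [Finset.mem_filter, Tset, Finset.mem_filter] at hF
    apply Finset.sdiff_sdiff_eq_self
    intro p hp
    exact Finset.mem_filter.mpr ⟨Finset.mem_univ _, hF.2 p hp⟩
  · intro D hD
    rw [Finset.mem_coe] at hD
    rw [Finset.mem_erase, downSet, Finset.mem_filter] at hD
    apply Finset.sdiff_sdiff_eq_self
    intro p hp
    exact Finset.mem_filter.mpr ⟨Finset.mem_univ _, hD.2.2.1 p hp⟩

lemma part2_card (N : ℕ) :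
    ((Tset N).filter (fun F => ¬ ∀ p ∈ F, (p.1 : ℕ) < (p.2 : ℕ))).card
      = (downSet N).card := by
  apply Finset.card_nbij' (fun F => (F.filter (fun p => (p.2 : ℕ) < (p.1 : ℕ))).image Prod.swap)
    (fun D => D.image Prod.swap ∪ (Finset.univ : Finset (Fin (N+1) × Fin (N+1))).filter (fun p => (p.1 : ℕ) ≤ (p.2 : ℕ)))
  · intro F hF
    rw [Finset.mem_coe] at hF ⊢
    rw [Finset.mem_filter, Tset, Finset.mem_filter] at hF
    obtain ⟨⟨-, hne, hup⟩, hnpos⟩ := hF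
    rw [downSet, Finset.mem_filter]
    refine ⟨Finset.mem_univ _, fun p hp => ?_, fun p hp q hq h1 h2 => ?_⟩
    · rw [mem_image_swap, Finset.mem_filter] at hp
      exact hp.2
    · rw [mem_image_swap, Finset.mem_filter] at hp ⊢
      obtain ⟨hpF, hpneg⟩ := hp
      have hle : pLe N p.swap q.swap := by
        intro k; simp only [sig, Prod.fst_swap, Prod.snd_swap]; split_ifs <;> omega
      exact ⟨hup p.swap hpF q.swap hle, hq⟩
  · intro D hD
    rw [Finset.mem_coe] at hD ⊢
    rw [downSet, Finset.mem_filter] at hD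
    obtain ⟨-, hD1, hD2⟩ := hD
    rw [Finset.mem_filter, Tset, Finset.mem_filter]
    have h00 : ((0, 0) : Fin (N+1) × Fin (N+1)) ∈ D.image Prod.swap ∪
        (Finset.univ : Finset (Fin (N+1) × Fin (N+1))).filter (fun p => (p.1 : ℕ) ≤ (p.2 : ℕ)) :=
      Finset.mem_union_right _ (Finset.mem_filter.mpr ⟨Finset.mem_univ _, le_rfl⟩)
    refine ⟨⟨Finset.mem_univ _, ⟨_, h00⟩, ?_⟩, fun hall => by simpa using hall _ h00⟩
    intro p hp q hle
    by_cases hq : (q.1 : ℕ) ≤ (q.2 : ℕ)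
    · exact Finset.mem_union_right _ (Finset.mem_filter.mpr ⟨Finset.mem_univ _, hq⟩)
    push_neg at hq
    have hpneg : (p.2 : ℕ) < (p.1 : ℕ) := neg_of_pLe_neg hq hle
    have hpD : p.swap ∈ D := by
      rcases Finset.mem_union.mp hp with h | h
      · rwa [mem_image_swap] at h
      · exact absurd (Finset.mem_filter.mp h).2 (by omega)
    obtain ⟨h1, h2⟩ := (pLe_neg_iff hpneg hq).mp hle
    apply Finset.mem_union_left
    rw [mem_image_swap]
    exact hD2 p.swap hpD q.swap hq h1 h2
  · intro F hF
    rw [Finset.mem_coe] at hF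
    rw [Finset.mem_filter, Tset, Finset.mem_filter] at hF
    obtain ⟨⟨-, hne, hup⟩, hnpos⟩ := hF
    push_neg at hnpos
    obtain ⟨p0, hp0F, hp0⟩ := hnpos
    apply Finset.Subset.antisymm
    · intro q hq
      rcases Finset.mem_union.mp hq with h | h
      · rw [mem_image_swap, mem_image_swap, Finset.mem_filter] at h
        simpa using h.1
      · exact hup p0 hp0F q (pLe_of_mixed (by omega) (Finset.mem_filter.mp h).2)
    · intro q hqF
      by_cases hq : (q.1 : ℕ) ≤ (q.2 : ℕ)
      · exact Finset.mem_union_right _ (Finset.mem_filter.mpr ⟨Finset.mem_univ _, hq⟩)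
      · apply Finset.mem_union_left
        rw [mem_image_swap, mem_image_swap, Finset.mem_filter]
        refine ⟨by simpa using hqF, ?_⟩
        simp only [Prod.fst_swap, Prod.snd_swap]
        omega
  · intro D hD
    rw [Finset.mem_coe] at hD
    rw [downSet, Finset.mem_filter] at hD
    have : ((D.image Prod.swap ∪ Finset.univ.filter
        (fun p => (p.1 : ℕ) ≤ (p.2 : ℕ))).filter (fun p => (p.2 : ℕ) < (p.1 : ℕ)))
        = D.image Prod.swap := by
      ext p
      rw [Finset.mem_filter, Finset.mem_union]
      constructor
      · rintro ⟨h | h, hneg⟩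
        · exact h
        · exact absurd (Finset.mem_filter.mp h).2 (by omega)
      · intro h
        have := hD.2.1 p.swap (mem_image_swap.mp h)
        exact ⟨Or.inl h, by simp only [Prod.fst_swap, Prod.snd_swap] at this; omega⟩
    beta_reduce; rw [this]
    ext p
    rw [mem_image_swap, mem_image_swap]
    simp

lemma Tcard (N : ℕ) : (Tset N).card = 2 * (downSet N).card - 1 := by
  have hsplit := Finset.card_filter_add_card_filter_not
    (s := Tset N) (p := fun F => ∀ p ∈ F, (p.1 : ℕ) < (p.2 : ℕ))
  rw [part1_card, part2_card] at hsplit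
  have hpos : 1 ≤ (downSet N).card := Finset.card_pos.mpr ⟨posP N, posP_mem_downSet N⟩
  omega

end M3
section M4

noncomputable instance (n : ℕ) : DecidablePred (fun m : Fin n → Fin (n+1) =>
    Monotone m ∧ ∀ i : Fin n, (i : ℕ) ≤ (m i : ℕ)) := Classical.decPred _

noncomputable def monoSet (n : ℕ) : Finset (Fin n → Fin (n+1)) :=
  Finset.univ.filter (fun m => Monotone m ∧ ∀ i : Fin n, (i : ℕ) ≤ (m i : ℕ))

def mOf (N : ℕ) (D : Finset (Fin (N + 1) × Fin (N + 1))) (i : Fin N) : Fin (N+1) :=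
  ⟨((D.filter (fun p => (p.1 : ℕ) = (i : ℕ))).sup (fun p => (p.2 : ℕ))) ⊔ (i : ℕ), by
    apply lt_of_le_of_lt (max_le (Finset.sup_le (fun p _ => by omega)) (by omega)) (lt_add_one N)⟩

noncomputable def DOf (N : ℕ) (m : Fin N → Fin (N+1)) : Finset (Fin (N + 1) × Fin (N + 1)) :=
  (posP N).filter (fun p => ∃ h : (p.1 : ℕ) < N, (p.2 : ℕ) ≤ (m ⟨(p.1 : ℕ), h⟩ : ℕ))

lemma downSet_card (N : ℕ) : (downSet N).card = (monoSet N).card := by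
  apply Finset.card_nbij' (mOf N) (DOf N)
  · intro D hD
    rw [Finset.mem_coe] at hD ⊢
    rw [downSet, Finset.mem_filter] at hD
    obtain ⟨-, hD1, hD2⟩ := hD
    rw [monoSet, Finset.mem_filter]
    refine ⟨Finset.mem_univ _, ?_, fun i => le_max_right _ _⟩
    intro i i' hii'
    rw [Fin.le_def]
    show max _ _ ≤ max _ _
    have hii : (i : ℕ) ≤ (i' : ℕ) := hii'
    apply max_le _ (le_trans hii (le_max_right _ _))
    apply Finset.sup_le
    intro p hp
    rw [Finset.mem_filter] at hp
    obtain ⟨hpD, hp1⟩ := hp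
    rcases Nat.lt_or_ge (i' : ℕ) (p.2 : ℕ) with h | h
    · have hq : (⟨(⟨(i' : ℕ), by omega⟩ : Fin (N+1)), p.2⟩ :
          Fin (N + 1) × Fin (N + 1)) ∈ D := by
        apply hD2 p hpD
        · exact h
        · simp; omega
        · simp
      apply le_trans _ (le_max_left _ _)
      have hqmem : (⟨(⟨(i' : ℕ), by omega⟩ : Fin (N+1)), p.2⟩ : Fin (N + 1) × Fin (N + 1)) ∈
          D.filter (fun r => (r.1 : ℕ) = (i' : ℕ)) := Finset.mem_filter.mpr ⟨hq, rfl⟩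
      exact Finset.le_sup (f := fun r => ((r.2 : ℕ) : ℕ)) hqmem
    · exact le_trans h (le_max_right _ _)
  · intro m hm
    rw [Finset.mem_coe] at hm ⊢
    rw [monoSet, Finset.mem_filter] at hm
    obtain ⟨-, hmono, hge⟩ := hm
    rw [downSet, Finset.mem_filter]
    refine ⟨Finset.mem_univ _, ?_, ?_⟩
    · intro p hp
      rw [DOf, Finset.mem_filter, posP, Finset.mem_filter] at hp
      exact hp.1.2
    · intro p hp q hqpos h1 h2
      rw [DOf, Finset.mem_filter, posP, Finset.mem_filter] at hp ⊢
      obtain ⟨⟨-, hppos⟩, hpn, hple⟩ := hp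
      have hq2 := q.2.isLt
      have hqn : (q.1 : ℕ) < N := by omega
      refine ⟨⟨Finset.mem_univ _, hqpos⟩, hqn, ?_⟩
      have : m ⟨(p.1 : ℕ), hpn⟩ ≤ m ⟨(q.1 : ℕ), hqn⟩ := hmono (by rw [Fin.le_def]; exact h1)
      omega
  · intro D hD
    rw [Finset.mem_coe] at hD
    rw [downSet, Finset.mem_filter] at hD
    obtain ⟨-, hD1, hD2⟩ := hD
    ext p
    rw [DOf, Finset.mem_filter, posP, Finset.mem_filter]
    constructor
    · rintro ⟨⟨-, hppos⟩, hpn, hple⟩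
      have hple : (p.2 : ℕ) ≤ max (((D.filter (fun r => (r.1 : ℕ) = (p.1 : ℕ))).sup (fun r => (r.2 : ℕ)))) ((p.1 : ℕ)) := hple
      have hsup : (p.2 : ℕ) ≤ (D.filter (fun r => (r.1 : ℕ) = (p.1 : ℕ))).sup
          (fun r => (r.2 : ℕ)) := by
        rcases le_max_iff.mp hple with h | h
        · exact h
        · omega
      have hne : (D.filter (fun r => (r.1 : ℕ) = (p.1 : ℕ))).Nonempty := by
        rw [Finset.nonempty_iff_ne_empty]
        intro hempty
        rw [hempty] at hsup
        simp only [Finset.sup_empty, bot_eq_zero] at hsup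
        omega
      obtain ⟨r, hr, hrsup⟩ := Finset.exists_mem_eq_sup _ hne (fun r => (r.2 : ℕ))
      rw [Finset.mem_filter] at hr
      exact hD2 r hr.1 p hppos (by omega) (by omega)
    · intro hpD
      have hppos := hD1 p hpD
      have hp2 := p.2.isLt
      have hlt : (p.1 : ℕ) < N := by omega
      refine ⟨⟨Finset.mem_univ _, hppos⟩, hlt, ?_⟩
      show (p.2 : ℕ) ≤ max _ _
      apply le_trans _ (le_max_left _ _)
      have hmem : p ∈ D.filter (fun r => (r.1 : ℕ) = ((⟨(p.1 : ℕ), hlt⟩ : Fin N) : ℕ)) :=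
        Finset.mem_filter.mpr ⟨hpD, by simp⟩
      exact Finset.le_sup (f := fun r => ((r.2 : ℕ) : ℕ)) hmem
  · intro m hm
    rw [Finset.mem_coe] at hm
    rw [monoSet, Finset.mem_filter] at hm
    obtain ⟨-, hmono, hge⟩ := hm
    funext i
    apply Fin.ext
    show max _ _ = (m i : ℕ)
    apply Nat.le_antisymm
    · apply max_le _ (hge i)
      apply Finset.sup_le
      intro p hp
      rw [Finset.mem_filter, DOf, Finset.mem_filter] at hp
      obtain ⟨⟨-, hpn, hple⟩, hp1⟩ := hp
      have : (⟨(p.1 : ℕ), hpn⟩ : Fin N) = i := Fin.ext hp1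
      rwa [this] at hple
    · rcases Nat.lt_or_ge (i : ℕ) (m i : ℕ) with h | h
      · apply le_trans _ (le_max_left _ _)
        have hmem : (⟨(⟨(i : ℕ), by omega⟩ : Fin (N+1)), m i⟩ : Fin (N + 1) × Fin (N + 1)) ∈
            (DOf N m).filter (fun r => (r.1 : ℕ) = (i : ℕ)) := by
          rw [Finset.mem_filter, DOf, Finset.mem_filter, posP, Finset.mem_filter]
          refine ⟨⟨⟨Finset.mem_univ _, by simpa using h⟩, by simpa using i.isLt, ?_⟩, by simp⟩
          convert le_refl ((m i : ℕ))
        exact Finset.le_sup (f := fun r => ((r.2 : ℕ) : ℕ)) hmem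
      · have : (m i : ℕ) = (i : ℕ) := le_antisymm h (hge i)
        rw [this]
        exact le_max_right _ _

end M4
section M5

noncomputable instance (n : ℕ) : DecidablePred (fun m : Fin n → Fin (n+1) =>
    Monotone m ∧ ∀ i : Fin n, (i : ℕ) < (m i : ℕ)) := Classical.decPred _

noncomputable def strictSet (n : ℕ) : Finset (Fin n → Fin (n+1)) :=
  Finset.univ.filter (fun m => Monotone m ∧ ∀ i : Fin n, (i : ℕ) < (m i : ℕ))

lemma monoSet_zero_card : (monoSet 0).card = 1 := by
  rw [show (monoSet 0) = Finset.univ from Finset.filter_true_of_mem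
    (fun m _ => ⟨fun a b _ => absurd a.isLt (by omega), fun i => absurd i.isLt (by omega)⟩)]
  simp [Finset.card_univ]

lemma strictSet_zero_card : (strictSet 0).card = 1 := by
  rw [show (strictSet 0) = Finset.univ from Finset.filter_true_of_mem
    (fun m _ => ⟨fun a b _ => absurd a.isLt (by omega), fun i => absurd i.isLt (by omega)⟩)]
  simp [Finset.card_univ]

set_option maxHeartbeats 2000000 in
lemma strictSet_succ_card (k : ℕ) : (strictSet (k+1)).card = (monoSet k).card := by
  apply Finset.card_nbij'
    (fun g => fun l : Fin k => (⟨(g ⟨(l : ℕ), by omega⟩ : ℕ) - 1, by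
      have := (g ⟨(l : ℕ), by omega⟩).isLt; omega⟩ : Fin (k+1)))
    (fun m => fun l : Fin (k+1) => if h : (l : ℕ) < k then
      (⟨(m ⟨(l : ℕ), h⟩ : ℕ) + 1, by have := (m ⟨(l : ℕ), h⟩).isLt; omega⟩ : Fin (k+2))
      else ⟨k + 1, by omega⟩)
  · intro g hg
    rw [Finset.mem_coe] at hg ⊢
    rw [strictSet, Finset.mem_filter] at hg
    obtain ⟨-, hmono, hstr⟩ := hg
    rw [monoSet, Finset.mem_filter]
    refine ⟨Finset.mem_univ _, ?_, ?_⟩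
    · intro a b hab
      have h1 : g ⟨(a : ℕ), by omega⟩ ≤ g ⟨(b : ℕ), by omega⟩ := hmono (by
        rw [Fin.le_def]; exact hab)
      rw [Fin.le_def] at h1 ⊢
      simp only [Fin.val_mk]
      omega
    · intro i
      have := hstr ⟨(i : ℕ), by omega⟩
      simp only [Fin.val_mk] at this ⊢
      omega
  · intro m hm
    rw [Finset.mem_coe] at hm ⊢
    rw [monoSet, Finset.mem_filter] at hm
    obtain ⟨-, hmono, hge⟩ := hm
    rw [strictSet, Finset.mem_filter]
    refine ⟨Finset.mem_univ _, ?_, ?_⟩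
    · intro a b hab
      rw [Fin.le_def]
      rcases Nat.lt_or_ge (a : ℕ) k with ha | ha <;> rcases Nat.lt_or_ge (b : ℕ) k with hb | hb
      · simp only [dif_pos ha, dif_pos hb, Fin.val_mk]
        have h1 : m ⟨(a : ℕ), ha⟩ ≤ m ⟨(b : ℕ), hb⟩ := hmono (by rw [Fin.le_def]; exact hab)
        rw [Fin.le_def] at h1
        omega
      · simp only [dif_pos ha, dif_neg (show ¬ ((b : ℕ) < k) by omega), Fin.val_mk]
        have := (m ⟨(a : ℕ), ha⟩).isLt
        omega
      · exfalso; rw [Fin.le_def] at hab; omega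
      · simp only [dif_neg (show ¬ ((a : ℕ) < k) by omega),
          dif_neg (show ¬ ((b : ℕ) < k) by omega), Fin.val_mk]
        exact le_rfl
    · intro i
      rcases Nat.lt_or_ge (i : ℕ) k with hi | hi
      · simp only [dif_pos hi, Fin.val_mk]
        have : (i : ℕ) ≤ ((m ⟨(i : ℕ), hi⟩ : Fin (k+1)) : ℕ) := hge ⟨(i : ℕ), hi⟩
        omega
      · simp only [dif_neg (show ¬ ((i : ℕ) < k) by omega), Fin.val_mk]
        have := i.isLt
        omega
  · intro g hg
    rw [Finset.mem_coe] at hg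
    rw [strictSet, Finset.mem_filter] at hg
    obtain ⟨-, hmono, hstr⟩ := hg
    funext l
    apply Fin.ext
    rcases Nat.lt_or_ge (l : ℕ) k with hl | hl
    · simp only [dif_pos hl, Fin.val_mk]
      have h5 : g ⟨(l : ℕ), by omega⟩ = g l := congrArg g (Fin.ext rfl)
      have h6 := congrArg Fin.val h5
      have := hstr l
      omega
    · simp only [dif_neg (show ¬ ((l : ℕ) < k) by omega), Fin.val_mk]
      have h2 := hstr l
      have h3 := (g l).isLt
      have h4 : (l : ℕ) = k := by have := l.isLt; omega
      have h5 : g ⟨(l : ℕ), by omega⟩ = g l := congrArg g (Fin.ext rfl)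
      have h6 := congrArg Fin.val h5
      omega
  · intro m hm
    rw [Finset.mem_coe] at hm
    rw [monoSet, Finset.mem_filter] at hm
    obtain ⟨-, hmono, hge⟩ := hm
    funext l
    apply Fin.ext
    have hl := l.isLt
    simp only [dif_pos hl, Fin.val_mk]
    have h5 : m ⟨(l : ℕ), hl⟩ = m l := congrArg m (Fin.ext rfl)
    have h6 := congrArg Fin.val h5
    have h7 := hge l
    omega

end M5
section M5b

noncomputable def ftt (n : ℕ) (m : Fin n → Fin (n+1)) : ℕ :=
  sInf {l : ℕ | l = n ∨ ∃ h : l < n, ((m ⟨l, h⟩ : ℕ) = l)}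

lemma ftt_mem (n : ℕ) (m : Fin n → Fin (n+1)) :
    ftt n m = n ∨ ∃ h : ftt n m < n, ((m ⟨ftt n m, h⟩ : ℕ) = ftt n m) := by
  have h : ftt n m ∈ {l : ℕ | l = n ∨ ∃ h : l < n, ((m ⟨l, h⟩ : ℕ) = l)} :=
    Nat.sInf_mem ⟨n, Or.inl rfl⟩
  exact h

lemma ftt_le (n : ℕ) (m : Fin n → Fin (n+1)) : ftt n m ≤ n :=
  Nat.sInf_le (Or.inl rfl)

lemma ftt_min (n : ℕ) (m : Fin n → Fin (n+1)) {l : ℕ} (h : l < ftt n m) (hl : l < n) :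
    (m ⟨l, hl⟩ : ℕ) ≠ l := by
  intro heq
  exact Nat.notMem_of_lt_sInf h (Or.inr ⟨hl, heq⟩)

lemma fiber_last (n : ℕ) :
    (monoSet n).filter (fun m => ftt n m = n) = strictSet n := by
  ext m
  rw [Finset.mem_filter, monoSet, Finset.mem_filter, strictSet, Finset.mem_filter]
  constructor
  · rintro ⟨⟨-, hmono, hge⟩, hft⟩
    refine ⟨Finset.mem_univ _, hmono, fun i => ?_⟩
    have hne : (m ⟨(i : ℕ), i.isLt⟩ : ℕ) ≠ (i : ℕ) := ftt_min n m (by omega) i.isLt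
    rw [Fin.eta] at hne
    have := hge i
    omega
  · rintro ⟨-, hmono, hstr⟩
    refine ⟨⟨Finset.mem_univ _, hmono, fun i => le_of_lt (hstr i)⟩, ?_⟩
    apply le_antisymm (ftt_le n m)
    rcases ftt_mem n m with h1 | ⟨h2, h3⟩
    · omega
    · exfalso
      have := hstr ⟨ftt n m, h2⟩
      simp only [Fin.val_mk] at this
      omega

def Imap (n j : ℕ) (hj : j < n) (m : Fin n → Fin (n+1)) :
    (Fin j → Fin (j+1)) × (Fin (n-1-j) → Fin (n-1-j+1)) :=
  (fun l => ⟨min ((m ⟨(l : ℕ), by have := l.isLt; omega⟩ : ℕ)) j, by omega⟩,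
   fun l => ⟨min ((m ⟨(l : ℕ)+j+1, by have := l.isLt; omega⟩ : ℕ) - (j+1)) (n-1-j), by omega⟩)

def Jmap (n j : ℕ) (hj : j < n)
    (pr : (Fin j → Fin (j+1)) × (Fin (n-1-j) → Fin (n-1-j+1))) : Fin n → Fin (n+1) :=
  fun l =>
    if h1 : (l : ℕ) < j then
      ⟨(pr.1 ⟨(l : ℕ), h1⟩ : ℕ), by have := (pr.1 ⟨(l : ℕ), h1⟩).isLt; omega⟩
    else if h2 : (l : ℕ) = j then ⟨j, by omega⟩
    else ⟨(pr.2 ⟨(l : ℕ)-j-1, by have := l.isLt; omega⟩ : ℕ) + j + 1,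
      by have := (pr.2 ⟨(l : ℕ)-j-1, by have := l.isLt; omega⟩).isLt; omega⟩

lemma Imap1_val (n j : ℕ) (hj : j < n) (m : Fin n → Fin (n+1)) (l : Fin j) :
    ((Imap n j hj m).1 l : ℕ) = min ((m ⟨(l : ℕ), by have := l.isLt; omega⟩ : ℕ)) j := rfl

lemma Imap2_val (n j : ℕ) (hj : j < n) (m : Fin n → Fin (n+1)) (l : Fin (n-1-j)) :
    ((Imap n j hj m).2 l : ℕ)
      = min ((m ⟨(l : ℕ)+j+1, by have := l.isLt; omega⟩ : ℕ) - (j+1)) (n-1-j) := rfl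

lemma Jmap_lt (n j : ℕ) (hj : j < n) (pr) (l : Fin n) (hl : (l : ℕ) < j) :
    ((Jmap n j hj pr) l : ℕ) = (pr.1 ⟨(l : ℕ), hl⟩ : ℕ) := by
  rw [Jmap, dif_pos hl]

lemma Jmap_eq (n j : ℕ) (hj : j < n) (pr) (l : Fin n) (hl : (l : ℕ) = j) :
    ((Jmap n j hj pr) l : ℕ) = j := by
  rw [Jmap, dif_neg (by omega), dif_pos hl]

lemma Jmap_gt (n j : ℕ) (hj : j < n) (pr) (l : Fin n) (hl : j < (l : ℕ)) :
    ((Jmap n j hj pr) l : ℕ)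
      = (pr.2 ⟨(l : ℕ)-j-1, by have := l.isLt; omega⟩ : ℕ) + j + 1 := by
  rw [Jmap, dif_neg (by omega), dif_neg (by omega)]

end M5b
section M5c

lemma fiber_card (n j : ℕ) (hj : j < n) :
    ((monoSet n).filter (fun m => ftt n m = j)).card
      = (strictSet j).card * (monoSet (n-1-j)).card := by
  rw [← Finset.card_product]
  apply Finset.card_nbij' (Imap n j hj) (Jmap n j hj)
  · -- forward membership
    intro m hm
    rw [Finset.mem_coe] at hm ⊢
    rw [Finset.mem_filter, monoSet, Finset.mem_filter] at hm
    obtain ⟨⟨-, hmono, hge⟩, hft⟩ := hm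
    have hmj : (m ⟨j, hj⟩ : ℕ) = j := by
      rcases ftt_mem n m with h1 | ⟨h2, h3⟩
      · omega
      · have he : (⟨ftt n m, h2⟩ : Fin n) = ⟨j, hj⟩ := Fin.ext hft
        rw [he] at h3
        omega
    have hbound : ∀ l : Fin n, (l : ℕ) ≤ j → (m l : ℕ) ≤ j := by
      intro l hl
      have h1 : (m l : ℕ) ≤ (m ⟨j, hj⟩ : ℕ) := hmono (by rw [Fin.le_def]; simpa using hl)
      omega
    have hstrict : ∀ l : Fin n, (l : ℕ) < j → (l : ℕ) < (m l : ℕ) := by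
      intro l hl
      have hne : (m ⟨(l : ℕ), l.isLt⟩ : ℕ) ≠ (l : ℕ) := ftt_min n m (by omega) l.isLt
      rw [Fin.eta] at hne
      have := hge l
      omega
    rw [Finset.mem_product]
    constructor
    · rw [strictSet, Finset.mem_filter]
      refine ⟨Finset.mem_univ _, ?_, ?_⟩
      · intro a b hab
        rw [Fin.le_def, Imap1_val, Imap1_val]
        have h1 : (m ⟨(a : ℕ), by have := a.isLt; omega⟩ : ℕ)
            ≤ (m ⟨(b : ℕ), by have := b.isLt; omega⟩ : ℕ) :=
          hmono (by rw [Fin.le_def]; exact hab)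
        omega
      · intro l
        rw [Imap1_val]
        have h1 : ((⟨(l : ℕ), by have := l.isLt; omega⟩ : Fin n) : ℕ)
            < (m ⟨(l : ℕ), by have := l.isLt; omega⟩ : ℕ) :=
          hstrict _ (by simpa using l.isLt)
        simp only [Fin.val_mk] at h1
        have := l.isLt
        omega
    · rw [monoSet, Finset.mem_filter]
      refine ⟨Finset.mem_univ _, ?_, ?_⟩
      · intro a b hab
        rw [Fin.le_def, Imap2_val, Imap2_val]
        have h1 : (m ⟨(a : ℕ)+j+1, by have := a.isLt; omega⟩ : ℕ)
            ≤ (m ⟨(b : ℕ)+j+1, by have := b.isLt; omega⟩ : ℕ) := by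
          apply hmono
          rw [Fin.le_def]
          simp only [Fin.val_mk]
          have := Fin.le_def.mp hab
          omega
        omega
      · intro l
        rw [Imap2_val]
        have h1 : ((l : ℕ)+j+1 : ℕ) ≤ (m ⟨(l : ℕ)+j+1, by have := l.isLt; omega⟩ : ℕ) :=
          hge ⟨(l : ℕ)+j+1, by have := l.isLt; omega⟩
        have := l.isLt
        omega
  · -- backward membership
    intro pr hpr
    rw [Finset.mem_coe] at hpr ⊢
    rw [Finset.mem_product, strictSet, Finset.mem_filter, monoSet, Finset.mem_filter] at hpr
    obtain ⟨⟨-, hgmono, hgstr⟩, -, hhmono, hhge⟩ := hpr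
    rw [Finset.mem_filter, monoSet, Finset.mem_filter]
    refine ⟨⟨Finset.mem_univ _, ?_, ?_⟩, ?_⟩
    · -- monotone
      intro a b hab
      have hable := Fin.le_def.mp hab
      rw [Fin.le_def]
      rcases Nat.lt_trichotomy (a : ℕ) j with ha | ha | ha <;>
        rcases Nat.lt_trichotomy (b : ℕ) j with hb | hb | hb
      · rw [Jmap_lt n j hj pr a ha, Jmap_lt n j hj pr b hb]
        have h1 : (pr.1 ⟨(a : ℕ), ha⟩ : ℕ) ≤ (pr.1 ⟨(b : ℕ), hb⟩ : ℕ) :=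
          hgmono (by rw [Fin.le_def]; simpa using hable)
        omega
      · rw [Jmap_lt n j hj pr a ha, Jmap_eq n j hj pr b hb]
        have h1 := (pr.1 ⟨(a : ℕ), ha⟩).isLt
        omega
      · rw [Jmap_lt n j hj pr a ha, Jmap_gt n j hj pr b hb]
        have h1 := (pr.1 ⟨(a : ℕ), ha⟩).isLt
        omega
      · exact absurd hable (by omega)
      · rw [Jmap_eq n j hj pr a ha, Jmap_eq n j hj pr b hb]
      · rw [Jmap_eq n j hj pr a ha, Jmap_gt n j hj pr b hb]
        omega
      · exact absurd hable (by omega)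
      · exact absurd hable (by omega)
      · rw [Jmap_gt n j hj pr a ha, Jmap_gt n j hj pr b hb]
        have h1 : (pr.2 ⟨(a : ℕ)-j-1, by have := a.isLt; omega⟩ : ℕ)
            ≤ (pr.2 ⟨(b : ℕ)-j-1, by have := b.isLt; omega⟩ : ℕ) := by
          apply hhmono
          rw [Fin.le_def]
          simp only [Fin.val_mk]
          omega
        omega
    · -- ge
      intro l
      rcases Nat.lt_trichotomy (l : ℕ) j with hl | hl | hl
      · rw [Jmap_lt n j hj pr l hl]
        have h1 := hgstr ⟨(l : ℕ), hl⟩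
        simp only [Fin.val_mk] at h1
        omega
      · rw [Jmap_eq n j hj pr l hl]
        omega
      · rw [Jmap_gt n j hj pr l hl]
        have h1 : (((⟨(l : ℕ)-j-1, by have := l.isLt; omega⟩ : Fin (n-1-j))) : ℕ)
            ≤ (pr.2 ⟨(l : ℕ)-j-1, by have := l.isLt; omega⟩ : ℕ) := hhge _
        simp only [Fin.val_mk] at h1
        omega
    · -- first tight index
      apply le_antisymm
      · exact Nat.sInf_le (Or.inr ⟨hj, Jmap_eq n j hj pr ⟨j, hj⟩ rfl⟩)
      · apply le_csInf ⟨n, Or.inl rfl⟩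
        rintro x (rfl | ⟨hx, hxval⟩)
        · omega
        · by_contra hcon
          push_neg at hcon
          rw [Jmap_lt n j hj pr ⟨x, hx⟩ hcon] at hxval
          have h1 := hgstr ⟨x, hcon⟩
          simp only [Fin.val_mk] at h1 hxval
          omega
  · -- left inverse
    intro m hm
    rw [Finset.mem_coe] at hm
    rw [Finset.mem_filter, monoSet, Finset.mem_filter] at hm
    obtain ⟨⟨-, hmono, hge⟩, hft⟩ := hm
    have hmj : (m ⟨j, hj⟩ : ℕ) = j := by
      rcases ftt_mem n m with h1 | ⟨h2, h3⟩
      · omega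
      · have he : (⟨ftt n m, h2⟩ : Fin n) = ⟨j, hj⟩ := Fin.ext hft
        rw [he] at h3
        omega
    have hbound : ∀ l : Fin n, (l : ℕ) ≤ j → (m l : ℕ) ≤ j := by
      intro l hl
      have h1 : (m l : ℕ) ≤ (m ⟨j, hj⟩ : ℕ) := hmono (by rw [Fin.le_def]; simpa using hl)
      omega
    funext l
    apply Fin.ext
    rcases Nat.lt_trichotomy (l : ℕ) j with hl | hl | hl
    · rw [Jmap_lt n j hj _ l hl, Imap1_val]
      simp only [Fin.val_mk]
      have h1 := hbound l (le_of_lt hl)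
      have h2 : (m ⟨(l : ℕ), by have := l.isLt; omega⟩ : ℕ) = (m l : ℕ) := by rw [Fin.eta]
      omega
    · rw [Jmap_eq n j hj _ l hl]
      have he : l = ⟨j, hj⟩ := Fin.ext hl
      rw [he]
      omega
    · rw [Jmap_gt n j hj _ l hl, Imap2_val]
      simp only [Fin.val_mk]
      have he : (⟨((l : ℕ)-j-1)+j+1, by have := l.isLt; omega⟩ : Fin n) = l :=
        Fin.ext (by simp only [Fin.val_mk]; omega)
      rw [he]
      have h1 := hge l
      have h2 := (m l).isLt
      omega
  · -- right inverse
    intro pr hpr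
    rw [Finset.mem_coe] at hpr
    rw [Finset.mem_product, strictSet, Finset.mem_filter, monoSet, Finset.mem_filter] at hpr
    obtain ⟨⟨-, hgmono, hgstr⟩, -, hhmono, hhge⟩ := hpr
    refine Prod.ext ?_ ?_
    · funext l
      apply Fin.ext
      rw [Imap1_val n j hj _ l]
      rw [Jmap_lt n j hj pr ⟨(l : ℕ), by have := l.isLt; omega⟩ (by simpa using l.isLt)]
      simp only [Fin.val_mk]
      have h1 := (pr.1 l).isLt
      have h2 : pr.1 ⟨(l : ℕ), by simpa using l.isLt⟩ = pr.1 l := congrArg pr.1 (Fin.ext rfl)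
      have h3 := congrArg Fin.val h2
      simp only [Fin.val_mk] at h3
      omega
    · funext l
      apply Fin.ext
      rw [Imap2_val n j hj _ l]
      rw [Jmap_gt n j hj pr ⟨(l : ℕ)+j+1, by have := l.isLt; omega⟩
        (by simp only [Fin.val_mk]; omega)]
      simp only [Fin.val_mk]
      have he : (⟨((l : ℕ)+j+1)-j-1, by have := l.isLt; omega⟩ : Fin (n-1-j)) = l :=
        Fin.ext (by simp only [Fin.val_mk]; omega)
      rw [he]
      have h1 := (pr.2 l).isLt
      omega

end M5c
section M5d

lemma mono_card_eq (n : ℕ) :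
    (monoSet n).card
      = ∑ j ∈ Finset.range (n+1), (strictSet j).card * (strictSet (n - j)).card := by
  rw [Finset.card_eq_sum_card_fiberwise (f := ftt n) (t := Finset.range (n+1))
    (fun m _ => Finset.mem_range.mpr (by have := ftt_le n m; omega))]
  apply Finset.sum_congr rfl
  intro j hj
  rw [Finset.mem_range] at hj
  rcases Nat.lt_or_ge j n with hlt | hge
  · rw [fiber_card n j hlt]
    congr 1
    have he : n - j = (n-1-j) + 1 := by omega
    rw [he, strictSet_succ_card]
  · have hjn : j = n := by omega
    subst hjn
    rw [Nat.sub_self, strictSet_zero_card, mul_one, fiber_last]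

lemma strictSet_card_catalan : ∀ k, (strictSet k).card = catalan k := by
  intro k
  induction k using Nat.strong_induction_on with
  | _ k ih =>
    match k with
    | 0 => rw [strictSet_zero_card, catalan_zero]
    | (k+1) =>
      rw [strictSet_succ_card, mono_card_eq, catalan_succ,
        Fin.sum_univ_eq_sum_range (fun i => catalan i * catalan (k - i))]
      apply Finset.sum_congr rfl
      intro j hj
      rw [Finset.mem_range] at hj
      rw [ih j (by omega), ih (k - j) (by omega)]

lemma monoSet_card_catalan (n : ℕ) : (monoSet n).card = catalan (n+1) := by
  rw [← strictSet_succ_card, strictSet_card_catalan]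

end M5d

/-- `(i,j)` outweighs `(i',j')` if `e_{i'} - e_{j'} ∈ (e_i - e_j) + O⁺` and the two differ. -/
def Outweighs (N : ℕ) (p q : Fin (N + 1) × Fin (N + 1)) : Prop :=
  rootVec N q.1 q.2 ≠ rootVec N p.1 p.2 ∧
  ∃ o : Fin (N + 1) → ℝ, o ∈ Oplus N ∧ rootVec N q.1 q.2 = rootVec N p.1 p.2 + o

theorem stmt11 (N : ℕ) :
    Set.ncard {P : Set (Fin (N + 1) → ℝ) |
      ∃ ζ : Finset (Fin (N + 1) × Fin (N + 1)), ζ.Nonempty ∧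
        P = convexHull ℝ ((fun p : Fin (N + 1) × Fin (N + 1) => rootVec N p.1 p.2) ''
              (ζ : Set (Fin (N + 1) × Fin (N + 1)))) + Oplus N} =
      2 * catalan (N + 1) - 1 := by
  rw [ncard_eq_Tcard, Tcard, downSet_card, monoSet_card_catalan]
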